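/- Let 1 ≤ m ≤ n be integers, p a prime, F : F_{p^n} → F_{p^m}, c ∈ F_{p^m} with c ≠ 1, and σ : F_{p^m} → Z/p^mZ any map. Then F is perfect₂ c-nonlinear if and only if F is c-differential bent₂. Moreover, F is strictly perfect₂ c-nonlinear if and only if W_F(x)·conj(W_{cF}(x)) = 0 for all x ∈ F_{p^n}. -/

import Mathlib

open Finset

noncomputable section

/-- Finite fields `GaloisField p n` are finite; fix a `Fintype` instance. -/
noncomputable instance (p n : ℕ) [Fact p.Prime] : Fintype (GaloisField p n) :=
  Fintype.ofFinite _

/-- `ζ_q = exp(2πi/q)`. -/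
noncomputable def zetaC (q : ℕ) : ℂ := Complex.exp (2 * Real.pi * Complex.I / q)

/-- `ζ_p^t` for `t ∈ F_p`, computed via the integer lift of `t`. -/
noncomputable def eChar (p : ℕ) (t : ZMod p) : ℂ := zetaC p ^ t.val

/-- `ζ_q^s` for `s ∈ Z/qZ`, computed via the integer lift of `s`. -/
noncomputable def eCharM (q : ℕ) (s : ZMod q) : ℂ := zetaC q ^ s.val

/-- The absolute trace `Tr_k : F_{p^k} → F_p`. -/
noncomputable def trAbs (p k : ℕ) [Fact p.Prime] (x : GaloisField p k) : ZMod p :=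
  Algebra.trace (ZMod p) (GaloisField p k) x

/-- The second-kind Walsh transform
`W_H(a) = ∑_x ζ_{p^m}^{σ(H(x))}·ζ_p^{−Tr_n(a·x)}`. -/
noncomputable def Walsh2 (p n m : ℕ) [Fact p.Prime] (σ : GaloisField p m → ZMod (p ^ m))
    (H : GaloisField p n → GaloisField p m) (a : GaloisField p n) : ℂ :=
  ∑ x : GaloisField p n, eCharM (p ^ m) (σ (H x)) * eChar p (-(trAbs p n (a * x)))

/-- The second-kind `c`-crosscorrelation
`cC_{F,G}(u) = ∑_x ζ_{p^m}^{σ(F(x+u)) − σ(c·G(x))}`, the difference of exponents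
taken in `Z/p^mZ`. -/
noncomputable def crossCorr2 (p n m : ℕ) [Fact p.Prime] (σ : GaloisField p m → ZMod (p ^ m))
    (F G : GaloisField p n → GaloisField p m) (c : GaloisField p m)
    (u : GaloisField p n) : ℂ :=
  ∑ x : GaloisField p n, eCharM (p ^ m) (σ (F (x + u)) - σ (c * G x))

/-- The second-kind `c`-autocorrelation `cC_F = cC_{F,F}`. -/
noncomputable def autoCorr2 (p n m : ℕ) [Fact p.Prime] (σ : GaloisField p m → ZMod (p ^ m))
    (F : GaloisField p n → GaloisField p m) (c : GaloisField p m)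
    (u : GaloisField p n) : ℂ :=
  crossCorr2 p n m σ F F c u

/-- `F` is perfect₂ `c`-nonlinear: `cC_F(u) = 0` for all `u ≠ 0`. -/
def PerfectCNonlinear2 (p n m : ℕ) [Fact p.Prime] (σ : GaloisField p m → ZMod (p ^ m))
    (F : GaloisField p n → GaloisField p m) (c : GaloisField p m) : Prop :=
  ∀ u : GaloisField p n, u ≠ 0 → autoCorr2 p n m σ F c u = 0

/-- `F` is strictly perfect₂ `c`-nonlinear: additionally `cC_F(0) = 0`. -/
def StrictlyPerfectCNonlinear2 (p n m : ℕ) [Fact p.Prime] (σ : GaloisField p m → ZMod (p ^ m))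
    (F : GaloisField p n → GaloisField p m) (c : GaloisField p m) : Prop :=
  PerfectCNonlinear2 p n m σ F c ∧ autoCorr2 p n m σ F c 0 = 0

/-- `F` is `c`-differential bent₂: `W_F(x)·conj(W_{cF}(x)) = cC_F(0)` for all `x`,
where `cF` is the map `x ↦ c·F(x)`. -/
def CDifferentialBent2 (p n m : ℕ) [Fact p.Prime] (σ : GaloisField p m → ZMod (p ^ m))
    (F : GaloisField p n → GaloisField p m) (c : GaloisField p m) : Prop :=
  ∀ x : GaloisField p n,
    Walsh2 p n m σ F x * (starRingEnd ℂ) (Walsh2 p n m σ (fun y => c * F y) x) =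
      autoCorr2 p n m σ F c 0

namespace Stmt15Aux

lemma zetaC_prim {q : ℕ} (hq : q ≠ 0) : IsPrimitiveRoot (zetaC q) q := by
  simpa [zetaC] using Complex.isPrimitiveRoot_exp q hq

lemma zetaC_pow_one (q : ℕ) [NeZero q] : zetaC q ^ q = 1 :=
  (zetaC_prim (NeZero.ne q)).pow_eq_one

/-- the standard character on `ZMod q`. -/
noncomputable def chi (q : ℕ) [NeZero q] : AddChar (ZMod q) ℂ :=
  AddChar.zmodChar q (zetaC_pow_one q)

lemma chi_apply (q : ℕ) [NeZero q] (t : ZMod q) : chi q t = zetaC q ^ t.val := rfl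

lemma eChar_eq (p : ℕ) [NeZero p] (t : ZMod p) : eChar p t = chi p t := rfl

lemma eCharM_eq (q : ℕ) [NeZero q] (s : ZMod q) : eCharM q s = chi q s := rfl

lemma chi_conj (q : ℕ) [NeZero q] (t : ZMod q) :
    (starRingEnd ℂ) (chi q t) = chi q (-t) := by
  have habs : ‖chi q t‖ = 1 := by
    rw [chi_apply]
    rw [norm_pow, Complex.norm_eq_one_of_pow_eq_one (zetaC_pow_one q) (NeZero.ne q), one_pow]
  rw [AddChar.map_neg_eq_inv, ← Complex.inv_eq_conj habs]

lemma chi_eq_one_iff (q : ℕ) [NeZero q] (t : ZMod q) : chi q t = 1 ↔ t = 0 :=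
  AddChar.IsPrimitive.zmod_char_eq_one_iff q
    (AddChar.zmodChar_primitive_of_primitive_root q (zetaC_prim (NeZero.ne q))) t

variable (p n : ℕ) [Fact p.Prime] [NeZero p]

open scoped Classical in
/-- Orthogonality of the additive characters of `GaloisField p n`. -/
lemma orth (v : GaloisField p n) :
    ∑ a : GaloisField p n, eChar p (trAbs p n (a * v)) =
      if v = 0 then (Fintype.card (GaloisField p n) : ℂ) else 0 := by
  classical
  split_ifs with hv
  · subst hv
    have : ∀ a : GaloisField p n, eChar p (trAbs p n (a * 0)) = 1 := by
      intro a
      rw [mul_zero, eChar_eq, trAbs, map_zero, AddChar.map_zero_eq_one]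
    simp only [this, Finset.sum_const, card_univ, nsmul_eq_mul, mul_one]
  · set f : GaloisField p n →+ ZMod p :=
      ((Algebra.trace (ZMod p) (GaloisField p n)).comp
        (LinearMap.mulRight (ZMod p) v)).toAddMonoidHom with hfdef
    have hf : ∀ a, f a = trAbs p n (a * v) := fun a => rfl
    set ψ : AddChar (GaloisField p n) ℂ := (chi p).compAddMonoidHom f with hψdef
    have hψne : ψ ≠ 0 := by
      rw [AddChar.ne_zero_iff]
      obtain ⟨b, hb⟩ : ∃ b, Algebra.trace (ZMod p) (GaloisField p n) (v * b) ≠ 0 := by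
        by_contra! hall
        exact hv ((traceForm_nondegenerate (ZMod p) (GaloisField p n)).1 v
          (fun y => by simpa [Algebra.traceForm_apply] using hall y))
      refine ⟨b, ?_⟩
      have : ψ b = chi p (trAbs p n (b * v)) := rfl
      rw [this, ne_eq, chi_eq_one_iff]
      rw [trAbs, mul_comm]
      exact hb
    have hsum := AddChar.sum_eq_zero_iff_ne_zero.mpr hψne
    calc ∑ a : GaloisField p n, eChar p (trAbs p n (a * v))
        = ∑ a : GaloisField p n, ψ a := by
          refine Finset.sum_congr rfl fun a _ => ?_
          rw [eChar_eq]; rfl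
      _ = 0 := hsum

variable (m : ℕ)

/-- The product of Walsh transforms is the Fourier transform of the autocorrelation. -/
lemma prod_eq [NeZero (p ^ m)] (σ : GaloisField p m → ZMod (p ^ m))
    (F : GaloisField p n → GaloisField p m) (c : GaloisField p m) (a : GaloisField p n) :
    Walsh2 p n m σ F a * (starRingEnd ℂ) (Walsh2 p n m σ (fun y => c * F y) a) =
      ∑ u : GaloisField p n, autoCorr2 p n m σ F c u * eChar p (-(trAbs p n (a * u))) := by
  rw [Walsh2, Walsh2, map_sum, Finset.sum_mul_sum]
  rw [Finset.sum_comm]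
  have RHS : ∑ u : GaloisField p n, autoCorr2 p n m σ F c u * eChar p (-(trAbs p n (a * u)))
      = ∑ y : GaloisField p n, ∑ u : GaloisField p n,
          eCharM (p ^ m) (σ (F (y + u)) - σ (c * F y)) * eChar p (-(trAbs p n (a * u))) := by
    rw [Finset.sum_comm]
    refine Finset.sum_congr rfl fun u _ => ?_
    rw [autoCorr2, crossCorr2, Finset.sum_mul]
  rw [RHS]
  refine Finset.sum_congr rfl fun y _ => ?_
  -- reindex x = y + u
  rw [← Fintype.sum_equiv (Equiv.addLeft y)
    (fun u => eCharM (p ^ m) (σ (F (y + u)) - σ (c * F y)) * eChar p (-(trAbs p n (a * u))))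
    (fun x => eCharM (p ^ m) (σ (F x)) * eChar p (-(trAbs p n (a * x))) *
      (starRingEnd ℂ) (eCharM (p ^ m) (σ (c * F y)) * eChar p (-(trAbs p n (a * y)))))
    ?_]
  intro u
  simp only [Equiv.coe_addLeft, map_mul, eCharM_eq, eChar_eq, chi_conj]
  rw [show (σ (F (y + u)) - σ (c * F y)) = σ (F (y + u)) + -(σ (c * F y)) from sub_eq_add_neg _ _]
  rw [AddChar.map_add_eq_mul]
  have htr : -(trAbs p n (a * u)) = -(trAbs p n (a * (y + u))) + - -(trAbs p n (a * y)) := by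
    rw [neg_neg, trAbs, trAbs, trAbs, mul_add, map_add]
    ring
  rw [htr, AddChar.map_add_eq_mul]
  ring

end Stmt15Aux

open Stmt15Aux in
theorem statement_15 (p n m : ℕ) [Fact p.Prime] (hm : 1 ≤ m) (hmn : m ≤ n)
    (F : GaloisField p n → GaloisField p m) (c : GaloisField p m) (hc : c ≠ 1)
    (σ : GaloisField p m → ZMod (p ^ m)) :
    (PerfectCNonlinear2 p n m σ F c ↔ CDifferentialBent2 p n m σ F c) ∧
    (StrictlyPerfectCNonlinear2 p n m σ F c ↔
      ∀ x : GaloisField p n,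
        Walsh2 p n m σ F x *
          (starRingEnd ℂ) (Walsh2 p n m σ (fun y => c * F y) x) = 0) := by
  classical
  haveI : NeZero p := ⟨(Fact.out : p.Prime).ne_zero⟩
  haveI : NeZero (p ^ m) := ⟨pow_ne_zero m (NeZero.ne p)⟩
  have cardC : (Fintype.card (GaloisField p n) : ℂ) ≠ 0 :=
    Nat.cast_ne_zero.mpr Fintype.card_ne_zero
  -- the "Fourier transform at 0 of autocorr" identity: ∑ a product(a) etc.
  -- bent direction forward
  have fwd : PerfectCNonlinear2 p n m σ F c → CDifferentialBent2 p n m σ F c := by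
    intro hP x
    rw [prod_eq p n m σ F c x]
    rw [Finset.sum_eq_single 0]
    · rw [mul_zero, trAbs, map_zero, neg_zero, eChar_eq, AddChar.map_zero_eq_one, mul_one]
    · intro u _ hu
      rw [hP u hu, zero_mul]
    · intro h; exact absurd (Finset.mem_univ 0) h
  -- key inversion computation: for any v,
  -- ∑ a, (W_F(a) conj W_{cF}(a)) * eChar p (trAbs (a*v)) = card * autoCorr(v)
  have inv_eq : ∀ v : GaloisField p n,
      ∑ a : GaloisField p n,
        (Walsh2 p n m σ F a * (starRingEnd ℂ) (Walsh2 p n m σ (fun y => c * F y) a)) *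
          eChar p (trAbs p n (a * v)) =
        (Fintype.card (GaloisField p n) : ℂ) * autoCorr2 p n m σ F c v := by
    intro v
    have step : ∀ a : GaloisField p n,
        (Walsh2 p n m σ F a * (starRingEnd ℂ) (Walsh2 p n m σ (fun y => c * F y) a)) *
          eChar p (trAbs p n (a * v)) =
        ∑ u : GaloisField p n, autoCorr2 p n m σ F c u *
          eChar p (trAbs p n (a * (v - u))) := by
      intro a
      rw [prod_eq p n m σ F c a, Finset.sum_mul]
      refine Finset.sum_congr rfl fun u _ => ?_
      rw [mul_assoc]
      congr 1
      rw [eChar_eq, eChar_eq, eChar_eq, ← AddChar.map_add_eq_mul]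
      congr 1
      rw [trAbs, trAbs, trAbs, mul_sub, map_sub]
      ring
    calc ∑ a : GaloisField p n,
        (Walsh2 p n m σ F a * (starRingEnd ℂ) (Walsh2 p n m σ (fun y => c * F y) a)) *
          eChar p (trAbs p n (a * v))
        = ∑ a : GaloisField p n, ∑ u : GaloisField p n,
            autoCorr2 p n m σ F c u * eChar p (trAbs p n (a * (v - u))) :=
          Finset.sum_congr rfl fun a _ => step a
      _ = ∑ u : GaloisField p n, autoCorr2 p n m σ F c u *
            ∑ a : GaloisField p n, eChar p (trAbs p n (a * (v - u))) := by
          rw [Finset.sum_comm]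
          exact Finset.sum_congr rfl fun u _ => by rw [Finset.mul_sum]
      _ = ∑ u : GaloisField p n, autoCorr2 p n m σ F c u *
            (if v - u = 0 then (Fintype.card (GaloisField p n) : ℂ) else 0) := by
          classical
          exact
          Finset.sum_congr rfl fun u _ => by rw [orth p n (v - u)]
      _ = (Fintype.card (GaloisField p n) : ℂ) * autoCorr2 p n m σ F c v := by
          classical
          rw [Finset.sum_eq_single v]
          · rw [sub_self, if_pos rfl]; ring
          · intro u _ hu
            rw [if_neg (sub_ne_zero.mpr (Ne.symm hu)), mul_zero]
          · intro h; exact absurd (Finset.mem_univ v) h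
  have bwd : CDifferentialBent2 p n m σ F c → PerfectCNonlinear2 p n m σ F c := by
    intro hB v hv
    have h1 := inv_eq v
    have h2 : ∑ a : GaloisField p n,
        (Walsh2 p n m σ F a * (starRingEnd ℂ) (Walsh2 p n m σ (fun y => c * F y) a)) *
          eChar p (trAbs p n (a * v)) = 0 := by
      have : ∀ a : GaloisField p n,
          (Walsh2 p n m σ F a * (starRingEnd ℂ) (Walsh2 p n m σ (fun y => c * F y) a)) *
            eChar p (trAbs p n (a * v)) =
          autoCorr2 p n m σ F c 0 * eChar p (trAbs p n (a * v)) := fun a => by rw [hB a]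
      rw [Finset.sum_congr rfl fun a _ => this a, ← Finset.mul_sum, orth p n v, if_neg hv,
        mul_zero]
    rw [h2] at h1
    exact (mul_eq_zero.mp h1.symm).resolve_left cardC
  refine ⟨⟨fwd, bwd⟩, ?_⟩
  constructor
  · rintro ⟨hP, h0⟩ x
    rw [fwd hP x, h0]
  · intro hz
    -- first: autoCorr(0) = 0
    have h0 : autoCorr2 p n m σ F c 0 = 0 := by
      have h1 := inv_eq 0
      have h2 : ∑ a : GaloisField p n,
          (Walsh2 p n m σ F a * (starRingEnd ℂ) (Walsh2 p n m σ (fun y => c * F y) a)) *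
            eChar p (trAbs p n (a * 0)) = 0 := by
        refine Finset.sum_eq_zero fun a _ => ?_
        rw [hz a, zero_mul]
      rw [h2] at h1
      exact (mul_eq_zero.mp h1.symm).resolve_left cardC
    have hB : CDifferentialBent2 p n m σ F c := fun x => by rw [hz x, h0]
    exact ⟨bwd hB, h0⟩
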